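/- Stable decomposition bound for NOSAS with exact solver: with the coarse extension R_0^T built from eigenvectors with eigenvalues below η and λ_min(η) the smallest retained-complement eigenvalue, for every u the unique decomposition u = R_0^T u_Γ + Σ_{i=1}^N R_i^T u_i satisfies a_0(u_Γ,u_Γ) + Σ_{i=1}^N a_i(u_i,u_i) ≤ (2 + 3/λ_min(η)) a(u,u). -/

import Mathlib

open Matrix

/-- stable decomposition for NOSAS with exact solver: the unique
decomposition `u = R₀ᵀ u_Γ + Σ_i R_iᵀ u_i` satisfies
`a₀(u_Γ,u_Γ) + Σ_i a_i(u_i,u_i) ≤ (2 + 3/λ_min(η)) a(u,u)`. -/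
theorem nosas_stable_decomposition
    {n p N : ℕ}
    (A : Matrix (Fin n) (Fin n) ℝ) (hA : A.PosDef)
    (S : Matrix (Fin p) (Fin p) ℝ)
    (RΓ : Matrix (Fin p) (Fin n) ℝ) (R0T : Matrix (Fin n) (Fin p) ℝ)
    (m : Fin N → ℕ) (RT : ∀ i, Matrix (Fin n) (Fin (m i)) ℝ)
    (lammin : ℝ) (hl0 : 0 < lammin) (hl1 : lammin ≤ 1)
    (hS : ∀ u : Fin n → ℝ, (RΓ *ᵥ u) ⬝ᵥ (S *ᵥ (RΓ *ᵥ u)) ≤ u ⬝ᵥ (A *ᵥ u))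
    (hA0 : ∀ uΓ : Fin p → ℝ,
      (R0T *ᵥ uΓ) ⬝ᵥ (A *ᵥ (R0T *ᵥ uΓ)) ≤ (1 / lammin) * (uΓ ⬝ᵥ (S *ᵥ uΓ)))
    (htrace : ∀ uΓ : Fin p → ℝ, RΓ *ᵥ (R0T *ᵥ uΓ) = uΓ)
    (hspan : ∀ w : Fin n → ℝ, RΓ *ᵥ w = 0 →
      ∃ ui : (i : Fin N) → Fin (m i) → ℝ, w = ∑ i, RT i *ᵥ ui i)
    (horth : ∀ i j, i ≠ j → ∀ (ui : Fin (m i) → ℝ) (uj : Fin (m j) → ℝ),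
      (RT i *ᵥ ui) ⬝ᵥ (A *ᵥ (RT j *ᵥ uj)) = 0) :
    ∀ u : Fin n → ℝ, ∃ ui : (i : Fin N) → Fin (m i) → ℝ,
      u = R0T *ᵥ (RΓ *ᵥ u) + ∑ i, RT i *ᵥ ui i ∧
        (R0T *ᵥ (RΓ *ᵥ u)) ⬝ᵥ (A *ᵥ (R0T *ᵥ (RΓ *ᵥ u))) +
            ∑ i, (RT i *ᵥ ui i) ⬝ᵥ (A *ᵥ (RT i *ᵥ ui i)) ≤
          (2 + 3 / lammin) * (u ⬝ᵥ (A *ᵥ u)) := by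
  intro u
  set uΓ := RΓ *ᵥ u with huΓ
  set v := R0T *ᵥ uΓ with hv
  have hwΓ : RΓ *ᵥ (u - v) = 0 := by
    rw [mulVec_sub, hv, htrace, huΓ, sub_self]
  obtain ⟨ui, hw⟩ := hspan (u - v) hwΓ
  refine ⟨ui, ?_, ?_⟩
  · rw [← hw]; abel
  · have hsymm : ∀ x y : Fin n → ℝ, x ⬝ᵥ (A *ᵥ y) = y ⬝ᵥ (A *ᵥ x) := by
      intro x y
      have hAt : Aᵀ = A := by
        rw [← conjTranspose_eq_transpose_of_trivial]; exact hA.isHermitian.eq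
      rw [dotProduct_mulVec, ← mulVec_transpose, hAt, dotProduct_comm]
    have hnn : ∀ x : Fin n → ℝ, 0 ≤ x ⬝ᵥ (A *ᵥ x) := fun x => by
      simpa using hA.posSemidef.dotProduct_mulVec_nonneg x
    set w := u - v with hwdef
    have hsum : ∑ i, (RT i *ᵥ ui i) ⬝ᵥ (A *ᵥ (RT i *ᵥ ui i)) = w ⬝ᵥ (A *ᵥ w) := by
      have hms : ∀ f : Fin N → Fin n → ℝ, A *ᵥ (∑ i, f i) = ∑ i, A *ᵥ f i := by
        intro f
        funext j
        simp only [mulVec, dotProduct, Finset.sum_apply, Finset.mul_sum]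
        exact Finset.sum_comm
      have hds : ∀ (x : Fin n → ℝ) (f : Fin N → Fin n → ℝ),
          x ⬝ᵥ (∑ i, f i) = ∑ i, x ⬝ᵥ f i := by
        intro x f
        simp only [dotProduct, Finset.mul_sum, Finset.sum_apply]
        exact Finset.sum_comm
      have hsd : ∀ (x : Fin n → ℝ) (f : Fin N → Fin n → ℝ),
          (∑ i, f i) ⬝ᵥ x = ∑ i, f i ⬝ᵥ x := by
        intro x f
        simp only [dotProduct, Finset.sum_mul, Finset.sum_apply]
        exact Finset.sum_comm
      rw [hw, hms, hsd]
      refine Finset.sum_congr rfl fun i _ => ?_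
      rw [hds]
      rw [Finset.sum_eq_single i (fun j _ hj => horth i j (Ne.symm hj) _ _) (by simp)]
    rw [hsum]
    have h1 : v ⬝ᵥ (A *ᵥ v) ≤ (1 / lammin) * (u ⬝ᵥ (A *ᵥ u)) := by
      calc v ⬝ᵥ (A *ᵥ v) ≤ (1 / lammin) * (uΓ ⬝ᵥ (S *ᵥ uΓ)) := hA0 uΓ
        _ ≤ (1 / lammin) * (u ⬝ᵥ (A *ᵥ u)) := by
            apply mul_le_mul_of_nonneg_left (by simpa [huΓ] using hS u)
            positivity
    have h2 : 0 ≤ (u + v) ⬝ᵥ (A *ᵥ (u + v)) := hnn _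
    have h3 : w ⬝ᵥ (A *ᵥ w) = u ⬝ᵥ (A *ᵥ u) - 2 * (u ⬝ᵥ (A *ᵥ v)) + v ⬝ᵥ (A *ᵥ v) := by
      simp only [hwdef, sub_dotProduct, mulVec_sub, dotProduct_sub]
      rw [hsymm v u]; ring
    have h4 : (u + v) ⬝ᵥ (A *ᵥ (u + v)) = u ⬝ᵥ (A *ᵥ u) + 2 * (u ⬝ᵥ (A *ᵥ v)) + v ⬝ᵥ (A *ᵥ v) := by
      simp only [add_dotProduct, mulVec_add, dotProduct_add]
      rw [hsymm v u]; ring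
    have hu : 0 ≤ u ⬝ᵥ (A *ᵥ u) := hnn u
    have hd : 3 / lammin = 3 * (1 / lammin) := by ring
    nlinarith [h1, h2, h3, h4, hu]
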